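/- Let $X$ be a real Banach space, $x_0 \in X$, $f_0 \in X^*$ with $\|x_0\| = \|f_0\| = 1$, $\langle f_0, x_0\rangle = 1$, $0 < \delta < 1/2$, and let $|||\cdot||| = |||\cdot|||_{(x_0,f_0),\delta}$. Then for all $h \in X$ with $\|h\| = 1$ and all $0 < t < \frac{\delta(1-\delta/2)}{(1-\delta)+|\langle f_0,h\rangle|}$: $$\frac{|||(1-\delta/2)x_0 + th||| - |||(1-\delta/2)x_0|||}{t} \geq \frac{\delta - (4-\delta)|\langle f_0,h\rangle|}{2(1-\delta/2)(2-\delta)}.$$ -/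

import Mathlib

set_option maxHeartbeats 1000000 in
theorem stmt_10 (X : Type*) [NormedAddCommGroup X] [NormedSpace ℝ X] [CompleteSpace X]
    (x0 : X) (f0 : X →L[ℝ] ℝ) (hx0 : ‖x0‖ = 1) (hf0 : ‖f0‖ = 1) (hfx : f0 x0 = 1)
    (δ : ℝ) (hδ0 : 0 < δ) (hδ1 : δ < 1/2)
    (ψ : X → ℝ) (hψ0 : ∀ y, 0 ≤ ψ y)
    (hψeq : ∀ y, ψ y = (1 - δ) * ‖y + (ψ y - f0 y) • x0‖)
    (hψuniq : ∀ y t, 0 ≤ t → t = (1 - δ) * ‖y + (t - f0 y) • x0‖ → t = ψ y)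
    (N : X → ℝ)
    (hN1 : ∀ y, |f0 y| < (1 - δ) * ‖y‖ → N y = ‖y‖)
    (hN2 : ∀ y, (1 - δ) * ‖y‖ ≤ f0 y → N y = ψ y / (1 - δ) + (f0 y - ψ y) / (1 - δ/2))
    (hN3 : ∀ y, f0 y ≤ -((1 - δ) * ‖y‖) → N y = N (-y))
    :
    ∀ h : X, ‖h‖ = 1 → ∀ t : ℝ, 0 < t → t < δ * (1 - δ/2) / ((1 - δ) + |f0 h|) →
      (δ - (4 - δ) * |f0 h|) / (2 * (1 - δ/2) * (2 - δ)) ≤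
        (N ((1 - δ/2) • x0 + t • h) - N ((1 - δ/2) • x0)) / t := by
  intro h hh t ht htlt
  have hd1 : (0:ℝ) < 1 - δ := by linarith
  have hd2 : (0:ℝ) < 1 - δ/2 := by linarith
  have hd3 : (0:ℝ) < 2 - δ := by linarith
  set a : ℝ := f0 h with ha_def
  have ha1 : |a| ≤ 1 := by
    have := f0.le_opNorm h
    rw [hf0, hh] at this
    simpa [Real.norm_eq_abs] using this
  have haa : 0 ≤ a + |a| := by
    rcases abs_cases a with ⟨h1, _⟩ | ⟨h1, _⟩ <;> linarith [abs_nonneg a]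
  -- value of f0 at the base point
  have hf0y0 : f0 ((1 - δ/2) • x0) = 1 - δ/2 := by
    rw [map_smul, hfx, smul_eq_mul]; ring
  -- ψ at the base point is 0
  have hψ0' : ψ ((1 - δ/2) • x0) = 0 := by
    refine (hψuniq _ 0 le_rfl ?_).symm
    rw [hf0y0]
    have : (1 - δ/2) • x0 + (0 - (1 - δ/2)) • x0 = (0 : X) := by module
    rw [this, norm_zero, mul_zero]
  -- N at the base point is 1
  have hN0 : N ((1 - δ/2) • x0) = 1 := by
    have hnorm : ‖(1 - δ/2) • x0‖ = 1 - δ/2 := by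
      rw [norm_smul, hx0, Real.norm_eq_abs, abs_of_pos hd2, mul_one]
    have hcone : (1 - δ) * ‖(1 - δ/2) • x0‖ ≤ f0 ((1 - δ/2) • x0) := by
      rw [hnorm, hf0y0]; nlinarith
    rw [hN2 _ hcone, hψ0', hf0y0]
    field_simp
    ring
  set yt : X := (1 - δ/2) • x0 + t • h with hyt_def
  have hf0yt : f0 yt = (1 - δ/2) + t * a := by
    rw [hyt_def, map_add, map_smul, map_smul, hfx, smul_eq_mul, smul_eq_mul]; ring
  have htkey : t * ((1 - δ) + |a|) < δ * (1 - δ/2) := by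
    have hpos : 0 < (1 - δ) + |a| := by linarith [abs_nonneg a]
    exact (lt_div_iff₀ hpos).mp htlt
  have hytnorm : ‖yt‖ ≤ (1 - δ/2) + t := by
    calc ‖yt‖ ≤ ‖(1 - δ/2) • x0‖ + ‖t • h‖ := norm_add_le _ _
    _ = (1 - δ/2) + t := by
        rw [norm_smul, norm_smul, hx0, hh, Real.norm_eq_abs, Real.norm_eq_abs,
          abs_of_pos hd2, abs_of_pos ht]; ring
  have hcone : (1 - δ) * ‖yt‖ ≤ f0 yt := by
    rw [hf0yt]
    have h1 : (1 - δ) * ‖yt‖ ≤ (1 - δ) * ((1 - δ/2) + t) :=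
      mul_le_mul_of_nonneg_left hytnorm hd1.le
    have h2 : -|a| ≤ a := neg_abs_le a
    nlinarith
  set s : ℝ := ψ yt with hs_def
  have hs0 : 0 ≤ s := hψ0 yt
  have hseq : s = (1 - δ) * ‖t • h + (s - t * a) • x0‖ := by
    have := hψeq yt
    rw [hf0yt] at this
    have hvec : yt + (s - ((1 - δ/2) + t * a)) • x0 = t • h + (s - t * a) • x0 := by
      rw [hyt_def]; module
    rw [← hs_def, hvec] at this
    exact this
  have hnorm_lb : t - |s - t * a| ≤ ‖t • h + (s - t * a) • x0‖ := by
    have h1 : ‖t • h‖ - ‖(s - t * a) • x0‖ ≤ ‖t • h + (s - t * a) • x0‖ := by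
      have := norm_sub_le (t • h + (s - t * a) • x0) ((s - t * a) • x0)
      simp only [add_sub_cancel_right] at this
      linarith
    rw [norm_smul, norm_smul, hx0, hh, Real.norm_eq_abs, Real.norm_eq_abs, mul_one, mul_one,
      abs_of_pos ht] at h1
    exact h1
  have habs : |s - t * a| ≤ s + t * |a| := by
    have h1 : |s - t * a| ≤ |s| + |t * a| := by
      simpa [sub_eq_add_neg] using abs_add_le s (-(t * a))
    rw [abs_of_nonneg hs0, abs_mul, abs_of_pos ht] at h1
    exact h1
  have key : (1 - δ) * (1 - |a|) * t ≤ s * (2 - δ) := by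
    have h1 : (1 - δ) * (t - (s + t * |a|)) ≤ s := by
      calc (1 - δ) * (t - (s + t * |a|)) ≤ (1 - δ) * (t - |s - t * a|) := by
            apply mul_le_mul_of_nonneg_left _ hd1.le
            linarith
      _ ≤ (1 - δ) * ‖t • h + (s - t * a) • x0‖ :=
            mul_le_mul_of_nonneg_left hnorm_lb hd1.le
      _ = s := hseq.symm
    nlinarith
  have hNyt : N yt = s / (1 - δ) + ((1 - δ/2) + t * a - s) / (1 - δ/2) := by
    rw [hN2 _ hcone, hf0yt, hs_def]
  rw [hNyt, hN0, le_div_iff₀ ht]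
  have hne1 : (1 - δ) ≠ 0 := ne_of_gt hd1
  have hne2 : (1 - δ/2) ≠ 0 := ne_of_gt hd2
  have expand : s / (1 - δ) + (1 - δ/2 + t * a - s) / (1 - δ/2) - 1
      = s * δ / (2 * (1 - δ) * (1 - δ/2)) + t * a / (1 - δ/2) := by
    field_simp
    ring
  rw [expand]
  have lin : (δ - (4 - δ) * |a|) * t * (1 - δ)
      ≤ s * δ * (2 - δ) + 2 * t * a * (1 - δ) * (2 - δ) := by
    have k1 := mul_le_mul_of_nonneg_left key hδ0.le
    have k2 : 0 ≤ (a + |a|) * (t * (1 - δ) * (2 - δ)) :=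
      mul_nonneg haa (by positivity)
    nlinarith [k1, k2]
  rw [div_mul_eq_mul_div, div_add_div _ _ (by positivity) hne2,
    div_le_div_iff₀ (by positivity) (by positivity)]
  have k3 := mul_le_mul_of_nonneg_right lin
    (by positivity : (0:ℝ) ≤ 2 * (1 - δ/2) * (1 - δ/2))
  nlinarith [k3]
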